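/- If R is an S-coherent ring, then the localization R_S is a coherent ring. -/

import Mathlib

set_option maxHeartbeats 1000000


/-- A module `M` is `S`-finite if it has a finitely generated submodule `N`
with `s • M ⊆ N` for some `s ∈ S`. -/
def IsSFinite (R : Type*) [CommRing R] (S : Submonoid R) (M : Type*) [AddCommGroup M]
    [Module R M] : Prop :=
  ∃ N : Submodule R M, N.FG ∧ ∃ s ∈ S, ∀ m : M, s • m ∈ N

/-- A module `M` is `S`-finitely presented if there is an exact sequence
`0 → K → F → M → 0` with `F` finitely generated free and `K` `S`-finite. -/
def IsSFinitelyPresented (R : Type*) [CommRing R] (S : Submonoid R) (M : Type*)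
    [AddCommGroup M] [Module R M] : Prop :=
  ∃ (n : ℕ) (f : (Fin n → R) →ₗ[R] M), Function.Surjective f ∧
    IsSFinite R S (LinearMap.ker f)

/-- `R` is `S`-coherent if every finitely generated ideal is `S`-finitely presented. -/
def IsSCoherent (R : Type*) [CommRing R] (S : Submonoid R) : Prop :=
  ∀ I : Ideal R, I.FG → IsSFinitelyPresented R S I

theorem s_coherent_localization_coherent {R : Type*} [CommRing R] (S : Submonoid R)
    (h : IsSCoherent R S) :
    ∀ J : Ideal (Localization S), J.FG → Module.FinitePresentation (Localization S) J := by
  classical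
  intro J hJ
  set A := Localization S with hA
  obtain ⟨T, hT⟩ := hJ
  -- clear denominators of the generators of `J`
  have hden : ∀ y : A, ∃ (c : S) (r : R),
      algebraMap R A r = algebraMap R A (c : R) * y := by
    intro y
    obtain ⟨⟨r, c⟩, hc⟩ := IsLocalization.surj S y
    exact ⟨c, r, by rw [← hc]; ring⟩
  choose c r hcr using hden
  set I : Ideal R := Ideal.span (r '' ↑T) with hI
  have hIfg : I.FG := ⟨T.image r, by rw [Finset.coe_image]⟩
  -- `J` is the image of `I`
  have hmap : I.map (algebraMap R A) = J := by
    rw [hI, Ideal.map_span]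
    apply le_antisymm
    · rw [Ideal.span_le]
      rintro _ ⟨_, ⟨y, hy, rfl⟩, rfl⟩
      rw [hcr y]
      exact J.mul_mem_left _ (hT ▸ Ideal.subset_span hy)
    · rw [← hT, Ideal.span_le]
      intro y hy
      obtain ⟨u, hu'⟩ := IsLocalization.map_units A (c y)
      have hm : algebraMap R A (r y) ∈ Ideal.span (algebraMap R A '' (r '' ↑T)) :=
        Ideal.subset_span ⟨r y, Set.mem_image_of_mem r hy, rfl⟩
      rw [hcr y, ← hu'] at hm
      have := Ideal.mul_mem_left _ ((u⁻¹ : (Localization S)ˣ) : A) hm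
      rwa [← mul_assoc, Units.inv_mul, one_mul] at this
  obtain ⟨m, f, hf, K, hKfg, s, hsS, hsK⟩ := h I hIfg
  set f₀ : (Fin m → R) →ₗ[R] R := I.subtype.comp f with hf₀
  have hker₀ : LinearMap.ker f₀ = LinearMap.ker f := by
    rw [hf₀, LinearMap.ker_comp, Submodule.ker_subtype]
    rfl
  set w : Fin m → R := fun i => f₀ (fun j => if i = j then 1 else 0) with hw
  set v : Fin m → A := fun i => algebraMap R A (w i) with hv
  set g : (Fin m → A) →ₗ[A] A := Fintype.linearCombination A v with hg
  have hgψ : ∀ x : Fin m → R,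
      g (fun i => algebraMap R A (x i)) = algebraMap R A (f₀ x) := by
    intro x
    rw [hg, Fintype.linearCombination_apply, LinearMap.pi_apply_eq_sum_univ f₀ x, map_sum]
    refine Finset.sum_congr rfl fun i _ => ?_
    simp only [smul_eq_mul, map_mul]
    rfl
  -- the range of `g` is `J`
  have hwI : Ideal.span (Set.range w) = I := by
    apply le_antisymm
    · rw [Ideal.span_le]
      rintro _ ⟨i, rfl⟩
      exact (f _).2
    · intro z hz
      obtain ⟨x, hx⟩ := hf ⟨z, hz⟩
      have hzx : f₀ x = z := by
        rw [hf₀]; simp [LinearMap.comp_apply, hx]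
      rw [← hzx, LinearMap.pi_apply_eq_sum_univ f₀ x]
      exact Ideal.sum_mem _ fun i _ =>
        Submodule.smul_mem _ _ (Ideal.subset_span ⟨i, rfl⟩)
  have hvJ : Ideal.span (Set.range v) = J := by
    have h2 : Set.range v = algebraMap R A '' Set.range w := by
      rw [hv, ← Set.range_comp]; rfl
    rw [h2, ← Ideal.map_span, hwI, hmap]
  have hrangeg : LinearMap.range g = Submodule.restrictScalars A J := by
    rw [hg, Fintype.range_linearCombination]
    exact hvJ
  have hgJ : ∀ x, g x ∈ J := by
    intro x
    have : g x ∈ LinearMap.range g := LinearMap.mem_range_self g x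
    rwa [hrangeg] at this
  set g' : (Fin m → A) →ₗ[A] J := LinearMap.codRestrict (Submodule.restrictScalars A J) g hgJ
    with hg'
  have hg'surj : Function.Surjective g' := by
    rintro ⟨y, hy⟩
    have : y ∈ LinearMap.range g := by rw [hrangeg]; exact hy
    obtain ⟨x, hx⟩ := this
    exact ⟨x, Subtype.ext hx⟩
  -- the kernel of `g` is finitely generated
  set K' : Submodule R (Fin m → R) := K.map (LinearMap.ker f).subtype with hK'
  obtain ⟨Tk, hTk⟩ := Submodule.FG.map (LinearMap.ker f).subtype hKfg
  have hK'ker : K' ≤ LinearMap.ker f₀ := by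
    rintro _ ⟨⟨x, hx⟩, _, rfl⟩
    rwa [hker₀]
  have hsK' : ∀ x ∈ LinearMap.ker f₀, s • x ∈ K' := by
    intro x hx
    rw [hker₀] at hx
    exact ⟨s • ⟨x, hx⟩, hsK ⟨x, hx⟩, rfl⟩
  set Ψ : (Fin m → R) →ₗ[R] (Fin m → A) := (Algebra.linearMap R A).compLeft (Fin m) with hΨ
  have hΨapp : ∀ (x : Fin m → R) (i : Fin m), Ψ x i = algebraMap R A (x i) := fun _ _ => rfl
  have hkerg : LinearMap.ker g = Submodule.span A (Ψ '' ↑Tk) := by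
    apply le_antisymm
    · intro x hx
      rw [LinearMap.mem_ker] at hx
      obtain ⟨t, ht⟩ := IsLocalization.exist_integer_multiples_of_finite S x
      choose a ha using ht
      have hψa : (fun i => algebraMap R A (a i)) = (t : R) • x := by
        funext i; exact ha i
      have h0 : algebraMap R A (f₀ a) = 0 := by
        rw [← hgψ a, hψa, ← algebraMap_smul A (t : R) x, map_smul, hx, smul_zero]
      obtain ⟨u, hu⟩ := (IsLocalization.map_eq_zero_iff S A (f₀ a)).mp h0
      have hua : (u : R) • a ∈ LinearMap.ker f₀ := by
        rw [LinearMap.mem_ker, map_smul, smul_eq_mul, hu]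
      have hsua : s • (u : R) • a ∈ Submodule.span R (↑Tk : Set (Fin m → R)) := by
        rw [hTk]; exact hsK' _ hua
      have hmem : Ψ (s • (u : R) • a) ∈ Submodule.span A (Ψ '' ↑Tk) := by
        have h1 : Ψ (s • (u : R) • a) ∈ Submodule.map Ψ (Submodule.span R (↑Tk : Set (Fin m → R))) :=
          Submodule.mem_map_of_mem hsua
        rw [Submodule.map_span] at h1
        exact Submodule.span_le_restrictScalars R A _ h1
      have hkey : Ψ (s • (u : R) • a) = algebraMap R A (s * (u : R) * (t : R)) • x := by
        funext i
        rw [hΨapp]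
        show algebraMap R A (s • ((u : R) • a) i) = (algebraMap R A (s * (u : R) * (t : R)) • x) i
        have : (algebraMap R A (s * (u : R) * (t : R)) • x) i
            = algebraMap R A (s * (u : R)) * ((t : R) • x i) := by
          simp [Pi.smul_apply, Algebra.smul_def, map_mul]
          ring
        rw [this, ← ha i]
        simp [Pi.smul_apply, smul_eq_mul, map_mul]
        ring
      rw [hkey] at hmem
      obtain ⟨uu, huu⟩ := IsLocalization.map_units A
        (⟨s * (u : R) * (t : R), mul_mem (mul_mem hsS u.2) t.2⟩ : S)
      rw [← huu] at hmem
      have := Submodule.smul_mem (Submodule.span A (Ψ '' ↑Tk)) ((uu⁻¹ : Aˣ) : A) hmem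
      rwa [smul_smul, Units.inv_mul, one_smul] at this
    · rw [Submodule.span_le]
      rintro _ ⟨x, hx, rfl⟩
      have hxK : x ∈ K' := by rw [hK', ← hTk]; exact Submodule.subset_span hx
      have hxker : f₀ x = 0 := hK'ker hxK
      rw [SetLike.mem_coe, LinearMap.mem_ker]
      have : g (fun i => algebraMap R A (x i)) = algebraMap R A (f₀ x) := hgψ x
      rw [hxker, map_zero] at this
      exact this
  have hkerfg : (LinearMap.ker g).FG := by
    refine ⟨Tk.image Ψ, ?_⟩
    rw [Finset.coe_image, ← hkerg]
  exact Module.finitePresentation_of_surjective g' hg'surj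
    (by
      have e : LinearMap.ker (LinearMap.codRestrict (Submodule.restrictScalars A J) g hgJ)
          = LinearMap.ker g := LinearMap.ker_codRestrict _ _ _
      rw [hg']; exact e.symm ▸ hkerfg)
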